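/- Suppose the static problem has the strict strong duality property: there exist φ_s and a monotone increasing continuous α with α(0)=0 such that L(y,u) ≥ L(y_s,u_s) + α(‖(y-y_s, u-u_s)‖) for all (y,u) ∈ E × F, where L(y,u) = f⁰(y,u) + ⟨A*φ_s,y⟩ + ⟨φ_s, f(y,u)⟩. Then the dynamic problem is strictly dissipative at (y_s,u_s) with storage function S(y) = -⟨φ_s,y⟩ and dissipation rate α: for any admissible pair, S(y(0)) + ∫₀^τ (f⁰(y,u) - f⁰(y_s,u_s)) dt ≥ S(y(τ)) + ∫₀^τ α(‖(y(t)-y_s, u(t)-u_s)‖) dt. -/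

import Mathlib

open MeasureTheory Set

/-- Strict strong duality for the static problem implies strict dissipativity of the
dynamic problem, with storage function `S(y) = -⟨φ_s, y⟩` and dissipation rate `α`. -/
theorem stmt_8
    {X U : Type*} [NormedAddCommGroup X] [NormedSpace ℝ X] [NormedAddCommGroup U]
    (f0 : X → U → ℝ) (f : X → U → X) (E : Set X) (F : Set U)
    (ys : X) (us : U) (hys : ys ∈ E) (hus : us ∈ F)
    (φs : X →L[ℝ] ℝ)       -- Lagrange multiplier
    (Aφ : X →L[ℝ] ℝ)       -- the functional y ↦ ⟨A*φ_s, y⟩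
    (hsteady : Aφ ys + φs (f ys us) = 0)
    (α : ℝ → ℝ) (hαmono : MonotoneOn α (Ici 0)) (hαcont : ContinuousOn α (Ici 0))
    (hα0 : α 0 = 0)
    -- strict strong duality: L(y,u) ≥ L(y_s,u_s) + α(‖(y-y_s,u-u_s)‖) on E × F
    (hSSD : ∀ y ∈ E, ∀ u ∈ F,
      f0 y u + Aφ y + φs (f y u) ≥
        (f0 ys us + Aφ ys + φs (f ys us)) + α ‖(y - ys, u - us)‖)
    (T : ℝ) (hT : 0 < T) (y : ℝ → X) (u : ℝ → U)
    (hyE : ∀ t ∈ Icc (0:ℝ) T, y t ∈ E) (huF : ∀ t ∈ Icc (0:ℝ) T, u t ∈ F)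
    -- mild/weak solution of ẏ = Ay + f(y,u), tested against φ_s
    (hmild : ∀ τ ∈ Icc (0:ℝ) T,
      φs (y τ) - φs (y 0) = ∫ t in (0:ℝ)..τ, (Aφ (y t) + φs (f (y t) (u t))))
    (hintg : IntegrableOn (fun t => f0 (y t) (u t)) (Icc (0:ℝ) T))
    (hintg' : IntegrableOn (fun t => Aφ (y t) + φs (f (y t) (u t))) (Icc (0:ℝ) T))
    (hintgα : IntegrableOn (fun t => α ‖(y t - ys, u t - us)‖) (Icc (0:ℝ) T)) :
    ∀ τ ∈ Icc (0:ℝ) T,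
      (-(φs (y 0))) + ∫ t in (0:ℝ)..τ, (f0 (y t) (u t) - f0 ys us) ≥
        (-(φs (y τ))) + ∫ t in (0:ℝ)..τ, α ‖(y t - ys, u t - us)‖ := by
  intro τ hτ
  obtain ⟨hτ0, hτT⟩ := hτ
  have hsub : Ioc (0:ℝ) τ ⊆ Icc (0:ℝ) T := fun t ht =>
    ⟨le_of_lt ht.1, ht.2.trans hτT⟩
  have h1 : IntervalIntegrable (fun t => f0 (y t) (u t)) volume 0 τ :=
    (intervalIntegrable_iff_integrableOn_Ioc_of_le hτ0).2 (hintg.mono_set hsub)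
  have h2 : IntervalIntegrable (fun t => Aφ (y t) + φs (f (y t) (u t))) volume 0 τ :=
    (intervalIntegrable_iff_integrableOn_Ioc_of_le hτ0).2 (hintg'.mono_set hsub)
  have h3 : IntervalIntegrable (fun t => α ‖(y t - ys, u t - us)‖) volume 0 τ :=
    (intervalIntegrable_iff_integrableOn_Ioc_of_le hτ0).2 (hintgα.mono_set hsub)
  have hconst : IntervalIntegrable (fun _ : ℝ => f0 ys us) volume 0 τ :=
    intervalIntegrable_const
  have key : (∫ t in (0:ℝ)..τ, (f0 ys us + α ‖(y t - ys, u t - us)‖)) ≤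
      ∫ t in (0:ℝ)..τ, (f0 (y t) (u t) + (Aφ (y t) + φs (f (y t) (u t)))) := by
    apply intervalIntegral.integral_mono_on hτ0 (hconst.add h3) (h1.add h2)
    intro t ht
    have htT : t ∈ Icc (0:ℝ) T := ⟨ht.1, ht.2.trans hτT⟩
    have := hSSD (y t) (hyE t htT) (u t) (huF t htT)
    show f0 ys us + α ‖(y t - ys, u t - us)‖ ≤ f0 (y t) (u t) + (Aφ (y t) + φs (f (y t) (u t)))
    linarith
  have hmτ := hmild τ ⟨hτ0, hτT⟩
  have e1 : (∫ t in (0:ℝ)..τ, (f0 ys us + α ‖(y t - ys, u t - us)‖)) =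
      τ * f0 ys us + ∫ t in (0:ℝ)..τ, α ‖(y t - ys, u t - us)‖ := by
    rw [intervalIntegral.integral_add hconst h3, intervalIntegral.integral_const]
    simp [smul_eq_mul]
  have e2 : (∫ t in (0:ℝ)..τ, (f0 (y t) (u t) + (Aφ (y t) + φs (f (y t) (u t))))) =
      (∫ t in (0:ℝ)..τ, f0 (y t) (u t)) + (φs (y τ) - φs (y 0)) := by
    rw [intervalIntegral.integral_add h1 h2, hmτ]
  have e3 : (∫ t in (0:ℝ)..τ, (f0 (y t) (u t) - f0 ys us)) =
      (∫ t in (0:ℝ)..τ, f0 (y t) (u t)) - τ * f0 ys us := by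
    rw [intervalIntegral.integral_sub h1 hconst, intervalIntegral.integral_const]
    simp [smul_eq_mul]
  rw [e1, e2] at key
  rw [e3]
  linarith
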